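/- arXiv:2109.08572 — 3 statements merged into one kernel-verified Lean document; each statement's English description precedes it below -/
import Mathlib

section
/- Let q ≥ 7 be a prime power. Any seven planes of PG(5,q) in higgledy-piggledy arrangement are pairwise disjoint. -/
open Module

namespace HP

variable (F : Type*) [Field F] (V : Type*) [AddCommGroup V] [Module F V]

/-- The set of points of the projective space `PG(V)` lying in a linear subspace `W`.
A projective point lies in `W` iff its representing one-dimensional subspace is below `W`. -/
def ptsIn (W : Submodule F V) : Set (Projectivization F V) := {P | P.submodule ≤ W}

/-- The linear span of a set of projective points. -/
noncomputable def spanPts (S : Set (Projectivization F V)) : Submodule F V :=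
  ⨆ P ∈ S, P.submodule

/-- `S` is a strong `k`-blocking set of an ambient projective space of projective
dimension `N`: every `(N-k)`-dimensional projective subspace `W` (i.e. linear subspace of
rank `N-k+1`) is spanned by its intersection with `S`. -/
def StrongBlock (N k : ℕ) (S : Set (Projectivization F V)) : Prop :=
  ∀ W : Submodule F V, finrank F W = N - k + 1 →
    spanPts F V (S ∩ ptsIn F V W) = W

end HP

open HP

section Aux

variable {F : Type*} [Field F] {V : Type*} [AddCommGroup V] [Module F V]
  [FiniteDimensional F V]

lemma aux_finrank_sup_span (p : Submodule F V) {x : V} (hx : x ∉ p) :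
    finrank F ↥(p ⊔ F ∙ x) = finrank F p + 1 := by
  have hx0 : x ≠ 0 := fun h => hx (h ▸ p.zero_mem)
  have hinf : p ⊓ (F ∙ x) = ⊥ := by
    rw [eq_bot_iff]
    rintro y ⟨hyp, hyx⟩
    rw [SetLike.mem_coe, Submodule.mem_span_singleton] at hyx
    obtain ⟨c, rfl⟩ := hyx
    rcases eq_or_ne c 0 with rfl | hc
    · simp
    · exfalso
      have h2 := p.smul_mem c⁻¹ hyp
      rw [smul_smul, inv_mul_cancel₀ hc, one_smul] at h2
      exact hx h2
  have h := Submodule.finrank_sup_add_finrank_inf_eq p (F ∙ x)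
  rw [hinf, finrank_bot, finrank_span_singleton hx0] at h
  omega

lemma aux_exists_between {p r : Submodule F V} (hpr : p ≤ r) {n : ℕ}
    (h1 : finrank F p ≤ n) (h2 : n ≤ finrank F r) :
    ∃ q : Submodule F V, p ≤ q ∧ q ≤ r ∧ finrank F q = n := by
  suffices h : ∀ (k : ℕ) (p : Submodule F V), p ≤ r → finrank F p ≤ n →
      n - finrank F p = k → ∃ q : Submodule F V, p ≤ q ∧ q ≤ r ∧ finrank F q = n from
    h _ p hpr h1 rfl
  intro k
  induction k with
  | zero =>
    intro p hpr h1 hgap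
    exact ⟨p, le_rfl, hpr, by omega⟩
  | succ k ih =>
    intro p hpr h1 hgap
    have hne : p ≠ r := by
      rintro rfl
      omega
    obtain ⟨x, hxr, hxp⟩ := SetLike.exists_of_lt (lt_of_le_of_ne hpr hne)
    have hsup := aux_finrank_sup_span p hxp
    have hle : p ⊔ (F ∙ x) ≤ r := sup_le hpr ((Submodule.span_singleton_le_iff_mem x r).mpr hxr)
    obtain ⟨q, hq1, hq2, hq3⟩ := ih (p ⊔ F ∙ x) hle (by omega) (by omega)
    exact ⟨q, le_trans le_sup_left hq1, hq2, hq3⟩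

lemma aux_exists_le_finrank (p : Submodule F V) {n : ℕ} (h : n ≤ finrank F p) :
    ∃ q : Submodule F V, q ≤ p ∧ finrank F q = n := by
  obtain ⟨q, _, hq2, hq3⟩ := aux_exists_between (bot_le : (⊥ : Submodule F V) ≤ p)
    (by simp : finrank F (⊥ : Submodule F V) ≤ n) h
  exact ⟨q, hq2, hq3⟩

lemma aux_one_le_finrank {p : Submodule F V} (h : p ≠ ⊥) : 1 ≤ finrank F p := by
  rw [Nat.one_le_iff_ne_zero]
  simpa using h

lemma aux_inf_ne_bot {a b c : Submodule F V} (ha : a ≤ c) (hb : b ≤ c)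
    (h : finrank F c < finrank F a + finrank F b) : a ⊓ b ≠ ⊥ := by
  intro hbot
  have h1 := Submodule.finrank_sup_add_finrank_inf_eq a b
  rw [hbot, finrank_bot] at h1
  have h2 : finrank F ↥(a ⊔ b) ≤ finrank F c := Submodule.finrank_mono (sup_le ha hb)
  omega

lemma aux_finrank_sup_le (a b : Submodule F V) :
    finrank F ↥(a ⊔ b) ≤ finrank F a + finrank F b := by
  have h1 := Submodule.finrank_sup_add_finrank_inf_eq a b
  omega

/-- Construction of a transversal plane: given seven solids (here planes of `PG(5,q)`,
i.e. rank-3 subspaces of a rank-6 space) with the first two intersecting nontrivially,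
there is a rank-3 subspace meeting all seven nontrivially. -/
lemma aux_exists_transversal (hV : finrank F V = 6)
    (π₁ π₂ p₃ p₄ p₅ p₆ p₇ : Submodule F V)
    (h1 : finrank F π₁ = 3) (h2 : finrank F π₂ = 3) (h3 : finrank F p₃ = 3)
    (h4 : finrank F p₄ = 3) (h5 : finrank F p₅ = 3) (h6 : finrank F p₆ = 3)
    (h7 : finrank F p₇ = 3) (hmeet : π₁ ⊓ π₂ ≠ ⊥) :
    ∃ T : Submodule F V, finrank F T = 3 ∧
      ∀ p ∈ ({π₁, π₂, p₃, p₄, p₅, p₆, p₇} : Set (Submodule F V)), T ⊓ p ≠ ⊥ := by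
  have hinf12 : 1 ≤ finrank F ↥(π₁ ⊓ π₂) := aux_one_le_finrank hmeet
  have hsup12 : finrank F ↥(π₁ ⊔ π₂) ≤ 5 := by
    have hh := Submodule.finrank_sup_add_finrank_inf_eq π₁ π₂
    omega
  have htop : finrank F (⊤ : Submodule F V) = 6 := by rw [finrank_top, hV]
  obtain ⟨H, hle12H, _, hH⟩ := aux_exists_between (le_top : π₁ ⊔ π₂ ≤ ⊤) hsup12 (by omega)
  have hrank_inf : ∀ p : Submodule F V, finrank F p = 3 → 2 ≤ finrank F ↥(p ⊓ H) := by
    intro p hp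
    have hh := Submodule.finrank_sup_add_finrank_inf_eq p H
    have hhle : finrank F ↥(p ⊔ H) ≤ 6 := by rw [← hV]; exact Submodule.finrank_le _
    omega
  obtain ⟨u₆, hu₆le, hu₆⟩ := aux_exists_le_finrank (p₆ ⊓ H) (hrank_inf p₆ h6)
  obtain ⟨u₇, hu₇le, hu₇⟩ := aux_exists_le_finrank (p₇ ⊓ H) (hrank_inf p₇ h7)
  have hu67H : u₆ ⊔ u₇ ≤ H := sup_le (hu₆le.trans inf_le_right) (hu₇le.trans inf_le_right)
  have hsup67 : finrank F ↥(u₆ ⊔ u₇) ≤ 4 := by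
    have hh := aux_finrank_sup_le u₆ u₇
    omega
  obtain ⟨H', h67H', hH'H, hH'⟩ := aux_exists_between hu67H hsup67 (by omega)
  have hx : ∀ p : Submodule F V, finrank F p = 3 → ∃ x, x ∈ p ⊓ H' ∧ x ≠ 0 := by
    intro p hp
    have hne : p ⊓ H' ≠ ⊥ := aux_inf_ne_bot le_top le_top (by omega)
    exact (Submodule.ne_bot_iff _).mp hne
  obtain ⟨x₃, hx₃, hx₃0⟩ := hx p₃ h3
  obtain ⟨x₄, hx₄, hx₄0⟩ := hx p₄ h4
  obtain ⟨x₅, hx₅, hx₅0⟩ := hx p₅ h5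
  have hS₀H' : (F ∙ x₃) ⊔ (F ∙ x₄) ⊔ (F ∙ x₅) ≤ H' :=
    sup_le (sup_le ((Submodule.span_singleton_le_iff_mem _ _).mpr (Submodule.mem_inf.mp hx₃).2)
      ((Submodule.span_singleton_le_iff_mem _ _).mpr (Submodule.mem_inf.mp hx₄).2))
      ((Submodule.span_singleton_le_iff_mem _ _).mpr (Submodule.mem_inf.mp hx₅).2)
  have hS₀rank : finrank F ↥((F ∙ x₃) ⊔ (F ∙ x₄) ⊔ (F ∙ x₅)) ≤ 3 := by
    have hh1 := aux_finrank_sup_le ((F ∙ x₃) ⊔ (F ∙ x₄)) (F ∙ x₅)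
    have hh2 := aux_finrank_sup_le (F ∙ x₃) (F ∙ x₄)
    rw [finrank_span_singleton hx₃0, finrank_span_singleton hx₄0] at hh2
    rw [finrank_span_singleton hx₅0] at hh1
    omega
  obtain ⟨T, hS₀T, hTH', hT⟩ := aux_exists_between hS₀H' hS₀rank (by omega)
  have hTH : T ≤ H := hTH'.trans hH'H
  refine ⟨T, hT, ?_⟩
  have hbig : ∀ pp : Submodule F V, pp ≤ H → finrank F pp = 3 → T ⊓ pp ≠ ⊥ := by
    intro pp hppH hpp
    exact aux_inf_ne_bot hTH hppH (by omega)
  have hmem : ∀ (x : V) (pp : Submodule F V), x ∈ pp → x ≠ 0 → x ∈ T → T ⊓ pp ≠ ⊥ := by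
    intro x pp hxp hx0 hxT
    exact (Submodule.ne_bot_iff _).mpr ⟨x, Submodule.mem_inf.mpr ⟨hxT, hxp⟩, hx0⟩
  have hsmall : ∀ u pp : Submodule F V, u ≤ pp → u ≤ H' → finrank F u = 2 → T ⊓ pp ≠ ⊥ := by
    intro u pp hupp huH' hu hbot
    have hne : T ⊓ u ≠ ⊥ := aux_inf_ne_bot hTH' huH' (by omega)
    exact hne (le_bot_iff.mp ((inf_le_inf_left T hupp).trans hbot.le))
  intro p hp
  simp only [Set.mem_insert_iff, Set.mem_singleton_iff] at hp
  rcases hp with rfl | rfl | rfl | rfl | rfl | rfl | rfl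
  · exact hbig p (le_trans le_sup_left hle12H) h1
  · exact hbig p (le_trans le_sup_right hle12H) h2
  · exact hmem x₃ p (Submodule.mem_inf.mp hx₃).1 hx₃0
      (hS₀T (Submodule.mem_sup_left (Submodule.mem_sup_left (Submodule.mem_span_singleton_self x₃))))
  · exact hmem x₄ p (Submodule.mem_inf.mp hx₄).1 hx₄0
      (hS₀T (Submodule.mem_sup_left (Submodule.mem_sup_right (Submodule.mem_span_singleton_self x₄))))
  · exact hmem x₅ p (Submodule.mem_inf.mp hx₅).1 hx₅0
      (hS₀T (Submodule.mem_sup_right (Submodule.mem_span_singleton_self x₅)))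
  · exact hsmall u₆ p (hu₆le.trans inf_le_left) (le_sup_left.trans h67H') hu₆
  · exact hsmall u₇ p (hu₇le.trans inf_le_left) (le_sup_right.trans h67H') hu₇

end Aux

/-- Counting lemma: a rank-3 space over `F_q`, `q ≥ 7`, is not covered by at most seven
proper subspaces. -/
lemma aux_exists_not_mem {F : Type*} [Field F] [Fintype F] (hq : 7 ≤ Fintype.card F)
    {Q : Type*} [AddCommGroup Q] [Module F Q] [Finite Q] (hQ : finrank F Q = 3)
    (s : Finset (Submodule F Q)) (hs : s.card ≤ 7) (hp : ∀ p ∈ s, p ≠ ⊤) :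
    ∃ x : Q, ∀ p ∈ s, x ∉ p := by
  by_contra hcon
  push_neg at hcon
  classical
  have : Fintype Q := Fintype.ofFinite Q
  haveI : FiniteDimensional F Q := Module.Finite.of_finite
  set q := Fintype.card F with hqdef
  have hcardQ : Fintype.card Q = q ^ 3 := by
    rw [card_eq_pow_finrank (K := F) (V := Q), hQ]
  have htcard : ∀ p ∈ s, (Finset.univ.filter (· ∈ p)).card ≤ q ^ 2 := by
    intro p hps
    have h1 : (Finset.univ.filter (· ∈ p)).card = Fintype.card p :=
      (Fintype.card_subtype _).symm
    have h2 : Fintype.card p = q ^ finrank F ↥p := card_eq_pow_finrank (K := F)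
    have h3 : finrank F ↥p < 3 := by
      rw [← hQ]
      exact Submodule.finrank_lt (hp p hps)
    rw [h1, h2]
    exact Nat.pow_le_pow_right (by omega) (by omega)
  have hcover : (Finset.univ : Finset Q) ⊆
      insert (0 : Q) (s.biUnion fun p => (Finset.univ.filter (· ∈ p)).erase 0) := by
    intro x _
    obtain ⟨p, hps, hxp⟩ := hcon x
    rcases eq_or_ne x 0 with rfl | hx0
    · exact Finset.mem_insert_self _ _
    · refine Finset.mem_insert_of_mem (Finset.mem_biUnion.mpr ⟨p, hps, ?_⟩)
      exact Finset.mem_erase.mpr ⟨hx0, Finset.mem_filter.mpr ⟨Finset.mem_univ _, hxp⟩⟩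
  have hq2 : 1 ≤ q ^ 2 := Nat.one_le_pow _ _ (by omega)
  have hbUnion : (s.biUnion fun p => (Finset.univ.filter (· ∈ p)).erase 0).card ≤
      s.card * (q ^ 2 - 1) := by
    refine (Finset.card_biUnion_le).trans ?_
    refine (Finset.sum_le_card_nsmul s _ (q ^ 2 - 1) ?_).trans (by simp [mul_comm])
    intro p hps
    have h0 : (0 : Q) ∈ Finset.univ.filter (· ∈ p) :=
      Finset.mem_filter.mpr ⟨Finset.mem_univ _, p.zero_mem⟩
    rw [Finset.card_erase_of_mem h0]
    have := htcard p hps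
    omega
  have hmain : q ^ 3 ≤ 1 + 7 * (q ^ 2 - 1) := by
    have hc1 := Finset.card_le_card hcover
    rw [Finset.card_univ, hcardQ] at hc1
    have hc2 := Finset.card_insert_le (0 : Q)
      (s.biUnion fun p => (Finset.univ.filter (· ∈ p)).erase 0)
    have hc3 : s.card * (q ^ 2 - 1) ≤ 7 * (q ^ 2 - 1) := Nat.mul_le_mul_right _ hs
    omega
  have e1 : q ^ 3 = q * q ^ 2 := by ring
  have e2 : 7 * q ^ 2 ≤ q * q ^ 2 := Nat.mul_le_mul_right _ hq
  omega

/-- for `q ≥ 7`, any seven planes of `PG(5,q)` in higgledy-piggledy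
arrangement are pairwise disjoint. -/
theorem stmt_16 (F : Type*) [Field F] [Fintype F] (hq : 7 ≤ Fintype.card F)
    (K : Set (Submodule F (Fin 6 → F)))
    (hdim : ∀ π ∈ K, finrank F π = 3)
    (hcard : K.ncard = 7)
    (hK : StrongBlock F (Fin 6 → F) 5 2 (⋃ π ∈ K, ptsIn F (Fin 6 → F) π)) :
    ∀ π₁ ∈ K, ∀ π₂ ∈ K, π₁ ≠ π₂ → π₁ ⊓ π₂ = ⊥ := by
  classical
  intro π₁ hπ₁ π₂ hπ₂ hne
  by_contra hbot
  have hVrank : finrank F (Fin 6 → F) = 6 := by simp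
  -- K is finite; enumerate its elements
  have hfin : K.Finite := by
    by_contra hinf
    rw [Set.Infinite.ncard hinf] at hcard
    omega
  set s := hfin.toFinset with hs
  have hscard : s.card = 7 := by
    rw [← Set.ncard_eq_toFinset_card K hfin]
    exact hcard
  have hπ₁s : π₁ ∈ s := hfin.mem_toFinset.mpr hπ₁
  have hπ₂s : π₂ ∈ s := hfin.mem_toFinset.mpr hπ₂
  set t : Finset (Submodule F (Fin 6 → F)) := (s.erase π₁).erase π₂ with ht
  have htcard : t.card = 5 := by
    rw [ht, Finset.card_erase_of_mem (Finset.mem_erase.mpr ⟨hne.symm, hπ₂s⟩),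
      Finset.card_erase_of_mem hπ₁s, hscard]
  obtain ⟨p₃, t₁, _, ht₁, ht₁c⟩ := Finset.card_eq_succ.mp (by omega : t.card = 4 + 1)
  obtain ⟨p₄, t₂, _, ht₂, ht₂c⟩ := Finset.card_eq_succ.mp (by omega : t₁.card = 3 + 1)
  obtain ⟨p₅, t₃, _, ht₃, ht₃c⟩ := Finset.card_eq_succ.mp (by omega : t₂.card = 2 + 1)
  obtain ⟨p₆, t₄, _, ht₄, ht₄c⟩ := Finset.card_eq_succ.mp (by omega : t₃.card = 1 + 1)
  obtain ⟨p₇, t₅, _, ht₅, ht₅c⟩ := Finset.card_eq_succ.mp (by omega : t₄.card = 0 + 1)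
  have ht₅e : t₅ = ∅ := Finset.card_eq_zero.mp ht₅c
  have hteq : t = {p₃, p₄, p₅, p₆, p₇} := by
    rw [← ht₁, ← ht₂, ← ht₃, ← ht₄, ← ht₅, ht₅e]
    rfl
  have htsubs : t ⊆ s := (Finset.erase_subset _ _).trans (Finset.erase_subset _ _)
  have hmemK : ∀ p : Submodule F (Fin 6 → F), p ∈ t → p ∈ K := by
    intro p hp
    exact hfin.mem_toFinset.mp (htsubs hp)
  have hp₃K : p₃ ∈ K := hmemK _ (by rw [hteq]; simp)
  have hp₄K : p₄ ∈ K := hmemK _ (by rw [hteq]; simp)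
  have hp₅K : p₅ ∈ K := hmemK _ (by rw [hteq]; simp)
  have hp₆K : p₆ ∈ K := hmemK _ (by rw [hteq]; simp)
  have hp₇K : p₇ ∈ K := hmemK _ (by rw [hteq]; simp)
  have hsub : ∀ p ∈ K, p ∈ ({π₁, π₂, p₃, p₄, p₅, p₆, p₇} : Set (Submodule F (Fin 6 → F))) := by
    intro p hp
    have hps : p ∈ s := hfin.mem_toFinset.mpr hp
    simp only [Set.mem_insert_iff, Set.mem_singleton_iff]
    rcases eq_or_ne p π₁ with rfl | hne1
    · exact Or.inl rfl
    rcases eq_or_ne p π₂ with rfl | hne2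
    · exact Or.inr (Or.inl rfl)
    have hpt : p ∈ t := by
      rw [ht]
      exact Finset.mem_erase.mpr ⟨hne2, Finset.mem_erase.mpr ⟨hne1, hps⟩⟩
    rw [hteq] at hpt
    simp only [Finset.mem_insert, Finset.mem_singleton] at hpt
    tauto
  -- obtain the transversal plane
  obtain ⟨T, hT, hTtrans⟩ := aux_exists_transversal hVrank π₁ π₂ p₃ p₄ p₅ p₆ p₇
    (hdim _ hπ₁) (hdim _ hπ₂) (hdim _ hp₃K) (hdim _ hp₄K) (hdim _ hp₅K) (hdim _ hp₆K)
    (hdim _ hp₇K) hbot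
  have htrK : ∀ p ∈ K, T ⊓ p ≠ ⊥ := fun p hp => hTtrans p (hsub p hp)
  -- the quotient by T
  haveI : Finite ((Fin 6 → F) ⧸ T) := Finite.of_surjective T.mkQ T.mkQ_surjective
  have hQ : finrank F ((Fin 6 → F) ⧸ T) = 3 := by
    have := Submodule.finrank_quotient_add_finrank T
    rw [hVrank, hT] at this
    omega
  set simg : Finset (Submodule F ((Fin 6 → F) ⧸ T)) := s.image (fun p => p.map T.mkQ)
    with hsimg
  have hsimgcard : simg.card ≤ 7 := le_of_le_of_eq Finset.card_image_le hscard
  have hproper : ∀ m ∈ simg, m ≠ ⊤ := by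
    intro m hm
    obtain ⟨p, hps, rfl⟩ := Finset.mem_image.mp hm
    intro htop
    have hpK : p ∈ K := hfin.mem_toFinset.mp hps
    have hsupT : T ⊔ p = ⊤ := by
      have hcm := Submodule.comap_map_mkQ T p
      rw [htop, Submodule.comap_top] at hcm
      exact hcm.symm
    have hh := Submodule.finrank_sup_add_finrank_inf_eq T p
    rw [hsupT, finrank_top, hVrank, hdim p hpK, hT] at hh
    exact htrK p hpK (Submodule.finrank_eq_zero.mp (by omega))
  obtain ⟨x, hx⟩ := aux_exists_not_mem hq hQ simg hsimgcard hproper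
  obtain ⟨v, rfl⟩ := T.mkQ_surjective x
  have hvT : v ∉ T := by
    intro hv
    have hx0 : T.mkQ v = 0 := by
      rwa [Submodule.mkQ_apply, Submodule.Quotient.mk_eq_zero]
    exact hx (π₁.map T.mkQ) (Finset.mem_image.mpr ⟨π₁, hπ₁s, rfl⟩)
      (hx0 ▸ Submodule.zero_mem _)
  set W := T ⊔ (F ∙ v) with hWdef
  have hW : finrank F ↥W = 4 := by
    rw [hWdef, aux_finrank_sup_span T hvT, hT]
  have hWspec := hK W (by omega)
  have hle : ∀ P ∈ (⋃ π ∈ K, ptsIn F (Fin 6 → F) π) ∩ ptsIn F (Fin 6 → F) W,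
      Projectivization.submodule P ≤ T := by
    intro P hP
    obtain ⟨hPU, hPW⟩ := hP
    obtain ⟨π, hπK, hPπ⟩ := Set.mem_iUnion₂.mp hPU
    have hPsub : Projectivization.submodule P ≤ π ⊓ W := le_inf hPπ hPW
    refine hPsub.trans ?_
    intro y hy
    obtain ⟨hyπ, hyW⟩ := Submodule.mem_inf.mp hy
    rw [hWdef] at hyW
    obtain ⟨a, haT, b, hbv, rfl⟩ := Submodule.mem_sup.mp hyW
    obtain ⟨c, rfl⟩ := Submodule.mem_span_singleton.mp hbv
    rcases eq_or_ne c 0 with rfl | hc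
    · simpa using haT
    · exfalso
      apply hx (π.map T.mkQ) (Finset.mem_image.mpr ⟨π, hfin.mem_toFinset.mpr hπK, rfl⟩)
      have ha0 : T.mkQ a = 0 := by
        rwa [Submodule.mkQ_apply, Submodule.Quotient.mk_eq_zero]
      have hq1 : T.mkQ (a + c • v) ∈ π.map T.mkQ := Submodule.mem_map_of_mem hyπ
      have hq2 : T.mkQ (a + c • v) = c • T.mkQ v := by
        rw [map_add, map_smul, ha0, zero_add]
      have hq3 : T.mkQ v = c⁻¹ • (c • T.mkQ v) := by
        rw [smul_smul, inv_mul_cancel₀ hc, one_smul]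
      rw [hq3, ← hq2]
      exact Submodule.smul_mem _ _ hq1
  have hWT : W ≤ T := by
    rw [← hWspec]
    exact iSup₂_le hle
  exact hvT (hWT (Submodule.mem_sup_right (Submodule.mem_span_singleton_self v)))
end

section
/- In PG(4,q), consider three solids Σ₁, Σ₂, Σ₃ meeting in a common line m, with planes π_ij = Σ_i ∩ Σ_j and chosen points and four lines ℓ₁₁, ℓ₁₂, ℓ₂₁, ℓ₂₂ as in the paper's Configuration 1. Then every plane of PG(4,q) meeting all four lines ℓ₁₁, ℓ₁₂, ℓ₂₁, ℓ₂₂ either (1) intersects Σ₃ in a line of π₁₃ through M₂ different from m, (2) intersects Σ₃ in a line of π₂₃ through M₁ different from m, (3) equals π₁₂, or (4) intersects π₁₂ in exactly one point not contained in ⟨M_i,P₁₂⟩ \ {M_i, P₁₂} for i ∈ {1,2}; moreover, for every point A ∈ π₁₂ \ (⟨M₁,P₁₂⟩ ∪ ⟨M₂,P₁₂⟩) there is a unique such plane meeting π₁₂ in exactly the point A. -/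
open Module

open HP

set_option linter.unusedSectionVars false

section Tools

variable {K : Type*} [Field K] {V : Type*} [AddCommGroup V] [Module K V] [FiniteDimensional K V]

lemma rk_sup_inf (s t : Submodule K V) :
    finrank K ↥(s ⊔ t) + finrank K ↥(s ⊓ t) = finrank K ↥s + finrank K ↥t :=
  Submodule.finrank_sup_add_finrank_inf_eq s t

lemma rk_mono {s t : Submodule K V} (h : s ≤ t) : finrank K ↥s ≤ finrank K ↥t :=
  Submodule.finrank_mono h

lemma rk_ne_bot {s : Submodule K V} (h : s ≠ ⊥) : 1 ≤ finrank K ↥s := by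
  rw [Nat.one_le_iff_ne_zero]; simpa using h

lemma ne_bot_of_rk {s : Submodule K V} (h : 1 ≤ finrank K ↥s) : s ≠ ⊥ := by
  intro hb; rw [hb] at h; simp [finrank_bot] at h

lemma ne_bot_mono {s t : Submodule K V} (h : s ≤ t) (hs : s ≠ ⊥) : t ≠ ⊥ :=
  fun hb => hs (le_bot_iff.mp (hb ▸ h))

lemma eq_of_le_rk {s t : Submodule K V} (h : s ≤ t) (hr : finrank K ↥t ≤ finrank K ↥s) :
    s = t := Submodule.eq_of_le_of_finrank_le h hr

lemma pt_eq {p s : Submodule K V} (hp : finrank K ↥p = 1) (hs : s ≤ p) (h : s ≠ ⊥) :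
    s = p := eq_of_le_rk hs (by rw [hp]; exact rk_ne_bot h)

lemma pt_inf_bot {p t : Submodule K V} (hp : finrank K ↥p = 1) (h : ¬ p ≤ t) :
    p ⊓ t = ⊥ := by
  by_contra hb
  exact h ((pt_eq hp inf_le_left hb).symm.le.trans inf_le_right)

/-- if `A ⊓ l` is contained in a point `q` different from the point `A`, it is trivial. -/
lemma inf_pt_bot {A l q : Submodule K V} (hA : finrank K ↥A = 1) (hq : finrank K ↥q = 1)
    (hle : A ⊓ l ≤ q) (hne : A ≠ q) : A ⊓ l = ⊥ := by
  by_contra hb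
  have h1 : A ⊓ l = q := pt_eq hq hle hb
  exact hne (eq_of_le_rk (h1 ▸ inf_le_left : q ≤ A) (by omega)).symm

lemma rk_sup_disj {s t : Submodule K V} (h : s ⊓ t = ⊥) :
    finrank K ↥(s ⊔ t) = finrank K ↥s + finrank K ↥t := by
  have h1 := rk_sup_inf s t
  rw [h, finrank_bot] at h1
  omega

lemma inf_rk_lower {s t W : Submodule K V} (hs : s ≤ W) (ht : t ≤ W) :
    finrank K ↥s + finrank K ↥t ≤ finrank K ↥W + finrank K ↥(s ⊓ t) := by
  have h1 := rk_sup_inf s t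
  have h2 : finrank K ↥(s ⊔ t) ≤ finrank K ↥W := rk_mono (sup_le hs ht)
  omega

lemma le_of_inf_rk {s t : Submodule K V} (h : finrank K ↥s ≤ finrank K ↥(s ⊓ t)) :
    s ≤ t :=
  ((eq_of_le_rk (inf_le_left : s ⊓ t ≤ s) h).symm.le).trans inf_le_right

/-- A line `l` not contained in a subspace `π` but sharing the point `p` with it meets
`π` exactly in `p`. -/
lemma line_pt {l π p : Submodule K V} (hl : finrank K ↥l = 2) (hnle : ¬ l ≤ π)
    (hp : finrank K ↥p = 1) (hpl : p ≤ l) (hpπ : p ≤ π) : l ⊓ π = p := by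
  have hub : finrank K ↥(l ⊓ π) ≤ 1 := by
    by_contra h
    push_neg at h
    exact hnle (le_of_inf_rk (by omega))
  exact (eq_of_le_rk (le_inf hpl hpπ) (by omega)).symm

/-- In a solid `S` spanned by two skew lines `l1, l2`, through each point `A` off
both lines there is a unique transversal line, namely `(A ⊔ l1) ⊓ (A ⊔ l2)`. -/
lemma transversal {S l1 l2 A : Submodule K V}
    (hS : finrank K ↥S = 4) (hl1 : finrank K ↥l1 = 2) (hl2 : finrank K ↥l2 = 2)
    (hsup : l1 ⊔ l2 = S) (hA : finrank K ↥A = 1) (hAS : A ≤ S)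
    (hA1 : A ⊓ l1 = ⊥) (hA2 : A ⊓ l2 = ⊥) :
    finrank K ↥((A ⊔ l1) ⊓ (A ⊔ l2)) = 2 ∧
    A ≤ (A ⊔ l1) ⊓ (A ⊔ l2) ∧
    ((A ⊔ l1) ⊓ (A ⊔ l2)) ⊓ l1 ≠ ⊥ ∧ ((A ⊔ l1) ⊓ (A ⊔ l2)) ⊓ l2 ≠ ⊥ ∧
    (∀ b : Submodule K V, finrank K ↥b = 2 → A ≤ b → b ⊓ l1 ≠ ⊥ → b ⊓ l2 ≠ ⊥ →
      b = (A ⊔ l1) ⊓ (A ⊔ l2)) := by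
  have hl1S : l1 ≤ S := le_sup_left.trans hsup.le
  have hl2S : l2 ≤ S := le_sup_right.trans hsup.le
  have h3a : finrank K ↥(A ⊔ l1) = 3 := by rw [rk_sup_disj hA1, hA, hl1]
  have h3b : finrank K ↥(A ⊔ l2) = 3 := by rw [rk_sup_disj hA2, hA, hl2]
  have hsupAB : (A ⊔ l1) ⊔ (A ⊔ l2) = S := by
    apply le_antisymm (sup_le (sup_le hAS hl1S) (sup_le hAS hl2S))
    calc S = l1 ⊔ l2 := hsup.symm
    _ ≤ (A ⊔ l1) ⊔ (A ⊔ l2) := sup_le_sup le_sup_right le_sup_right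
  have hc2 : finrank K ↥((A ⊔ l1) ⊓ (A ⊔ l2)) = 2 := by
    have := rk_sup_inf (A ⊔ l1) (A ⊔ l2)
    rw [hsupAB, hS, h3a, h3b] at this
    omega
  have hAc : A ≤ (A ⊔ l1) ⊓ (A ⊔ l2) := le_inf le_sup_left le_sup_left
  refine ⟨hc2, hAc, ?_, ?_, ?_⟩
  · apply ne_bot_of_rk
    have h1 : finrank K ↥((A ⊔ l1) ⊓ (A ⊔ l2)) + finrank K ↥l1
        ≤ finrank K ↥(A ⊔ l1) + finrank K ↥(((A ⊔ l1) ⊓ (A ⊔ l2)) ⊓ l1) :=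
      inf_rk_lower inf_le_left (le_sup_right : l1 ≤ A ⊔ l1)
    omega
  · apply ne_bot_of_rk
    have h1 : finrank K ↥((A ⊔ l1) ⊓ (A ⊔ l2)) + finrank K ↥l2
        ≤ finrank K ↥(A ⊔ l2) + finrank K ↥(((A ⊔ l1) ⊓ (A ⊔ l2)) ⊓ l2) :=
      inf_rk_lower inf_le_right (le_sup_right : l2 ≤ A ⊔ l2)
    omega
  · intro b hb hAb hb1 hb2
    have key : ∀ l : Submodule K V, A ⊓ l = ⊥ → b ⊓ l ≠ ⊥ → b ≤ A ⊔ l := by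
      intro l hAl hbl
      have hd : A ⊓ (b ⊓ l) = ⊥ := by
        refine le_bot_iff.mp ?_
        calc A ⊓ (b ⊓ l) ≤ A ⊓ l := inf_le_inf_left A inf_le_right
        _ = ⊥ := hAl
      have hr : finrank K ↥(A ⊔ (b ⊓ l)) = 1 + finrank K ↥(b ⊓ l) := by
        rw [rk_sup_disj hd, hA]
      have hle : A ⊔ (b ⊓ l) ≤ b := sup_le hAb inf_le_left
      have heq : A ⊔ (b ⊓ l) = b := by
        apply eq_of_le_rk hle
        have := rk_ne_bot hbl
        omega
      calc b = A ⊔ (b ⊓ l) := heq.symm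
      _ ≤ A ⊔ l := sup_le_sup_left inf_le_right A
    have hble : b ≤ (A ⊔ l1) ⊓ (A ⊔ l2) := le_inf (key l1 hA1 hb1) (key l2 hA2 hb2)
    exact eq_of_le_rk hble (by omega)

end Tools

set_option maxHeartbeats 1000000 in
/-- classification of the planes of `PG(4,q)` meeting the four lines
`ℓ₁₁, ℓ₁₂, ℓ₂₁, ℓ₂₂` of Configuration 1. Such a plane (1) meets `Σ₃` in a line of
`π₁₃` through `M₂` different from `m`, or (2) meets `Σ₃` in a line of `π₂₃` through
`M₁` different from `m`, or (3) equals `π₁₂`, or (4) meets `π₁₂` in exactly one point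
not in `⟨Mᵢ,P₁₂⟩ \ {Mᵢ,P₁₂}` for `i ∈ {1,2}`; moreover, through every point
`A ∈ π₁₂ \ (⟨M₁,P₁₂⟩ ∪ ⟨M₂,P₁₂⟩)` there is a unique such plane meeting `π₁₂`
exactly in `A`. -/
theorem stmt_17 (F : Type*) [Field F] [Fintype F]
    (Sg1 Sg2 Sg3 : Submodule F (Fin 5 → F))
    (hSg1 : finrank F Sg1 = 4) (hSg2 : finrank F Sg2 = 4) (hSg3 : finrank F Sg3 = 4)
    (m π12 π13 π23 : Submodule F (Fin 5 → F))
    (hm : m = Sg1 ⊓ Sg2 ⊓ Sg3) (hmdim : finrank F m = 2)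
    (hπ12 : π12 = Sg1 ⊓ Sg2) (hπ13 : π13 = Sg1 ⊓ Sg3) (hπ23 : π23 = Sg2 ⊓ Sg3)
    (hπ12dim : finrank F π12 = 3) (hπ13dim : finrank F π13 = 3) (hπ23dim : finrank F π23 = 3)
    (M1 M2 : Projectivization F (Fin 5 → F)) (hM : M1 ≠ M2)
    (hM1 : M1.submodule ≤ m) (hM2 : M2.submodule ≤ m)
    (P12 P13 P23 : Projectivization F (Fin 5 → F))
    (hP12 : P12.submodule ≤ π12) (hP12m : ¬ P12.submodule ≤ m)
    (hP13 : P13.submodule ≤ π13) (hP13m : ¬ P13.submodule ≤ m)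
    (hP23 : P23.submodule ≤ π23) (hP23m : ¬ P23.submodule ≤ m)
    (ℓ12 ℓ22 : Submodule F (Fin 5 → F))
    (hℓ12 : ℓ12 = P12.submodule ⊔ P13.submodule)
    (hℓ22 : ℓ22 = P12.submodule ⊔ P23.submodule)
    (ℓ11 ℓ21 : Submodule F (Fin 5 → F))
    (hℓ11dim : finrank F ℓ11 = 2) (hℓ11Sg : ℓ11 ≤ Sg1) (hℓ11M : M1.submodule ≤ ℓ11)
    (hℓ11skew : ℓ11 ⊓ ℓ12 = ⊥) (hℓ11a : ¬ ℓ11 ≤ π12) (hℓ11b : ¬ ℓ11 ≤ π13)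
    (hℓ21dim : finrank F ℓ21 = 2) (hℓ21Sg : ℓ21 ≤ Sg2) (hℓ21M : M2.submodule ≤ ℓ21)
    (hℓ21skew : ℓ21 ⊓ ℓ22 = ⊥) (hℓ21a : ¬ ℓ21 ≤ π12) (hℓ21b : ¬ ℓ21 ≤ π23) :
    (∀ α : Submodule F (Fin 5 → F), finrank F α = 3 →
      α ⊓ ℓ11 ≠ ⊥ → α ⊓ ℓ12 ≠ ⊥ → α ⊓ ℓ21 ≠ ⊥ → α ⊓ ℓ22 ≠ ⊥ →
      (α ⊓ Sg3 ≤ π13 ∧ finrank F (α ⊓ Sg3 : Submodule F (Fin 5 → F)) = 2 ∧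
        M2.submodule ≤ α ⊓ Sg3 ∧ α ⊓ Sg3 ≠ m) ∨
      (α ⊓ Sg3 ≤ π23 ∧ finrank F (α ⊓ Sg3 : Submodule F (Fin 5 → F)) = 2 ∧
        M1.submodule ≤ α ⊓ Sg3 ∧ α ⊓ Sg3 ≠ m) ∨
      (α = π12) ∨
      (finrank F (α ⊓ π12 : Submodule F (Fin 5 → F)) = 1 ∧
        (α ⊓ π12 ≤ M1.submodule ⊔ P12.submodule →
          α ⊓ π12 = M1.submodule ∨ α ⊓ π12 = P12.submodule) ∧
        (α ⊓ π12 ≤ M2.submodule ⊔ P12.submodule →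
          α ⊓ π12 = M2.submodule ∨ α ⊓ π12 = P12.submodule))) ∧
    (∀ A : Projectivization F (Fin 5 → F), A.submodule ≤ π12 →
      ¬ A.submodule ≤ M1.submodule ⊔ P12.submodule →
      ¬ A.submodule ≤ M2.submodule ⊔ P12.submodule →
      ∃! α : Submodule F (Fin 5 → F), finrank F α = 3 ∧
        α ⊓ ℓ11 ≠ ⊥ ∧ α ⊓ ℓ12 ≠ ⊥ ∧ α ⊓ ℓ21 ≠ ⊥ ∧ α ⊓ ℓ22 ≠ ⊥ ∧
        α ⊓ π12 = A.submodule) := by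
  -- ambient dimension
  have hV5 : finrank F (Fin 5 → F) = 5 := by simp
  have hIL : ∀ s t : Submodule F (Fin 5 → F),
      finrank F ↥s + finrank F ↥t ≤ 5 + finrank F ↥(s ⊓ t) := by
    intro s t
    have h1 := rk_sup_inf s t
    have h2 := Submodule.finrank_le (s ⊔ t)
    omega
  -- basic lattice facts
  have hπ12Sg1 : π12 ≤ Sg1 := by rw [hπ12]; exact inf_le_left
  have hπ12Sg2 : π12 ≤ Sg2 := by rw [hπ12]; exact inf_le_right
  have hπ13Sg1 : π13 ≤ Sg1 := by rw [hπ13]; exact inf_le_left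
  have hπ13Sg3 : π13 ≤ Sg3 := by rw [hπ13]; exact inf_le_right
  have hπ23Sg2 : π23 ≤ Sg2 := by rw [hπ23]; exact inf_le_left
  have hπ23Sg3 : π23 ≤ Sg3 := by rw [hπ23]; exact inf_le_right
  have hmπ12 : m ≤ π12 := by rw [hm, hπ12]; exact inf_le_left
  have hmSg3 : m ≤ Sg3 := by rw [hm]; exact inf_le_right
  have hmSg1 : m ≤ Sg1 := hmπ12.trans hπ12Sg1
  have hmSg2 : m ≤ Sg2 := hmπ12.trans hπ12Sg2
  -- point ranks
  have hM1r : finrank F ↥M1.submodule = 1 := M1.finrank_submodule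
  have hM2r : finrank F ↥M2.submodule = 1 := M2.finrank_submodule
  have hP12r : finrank F ↥P12.submodule = 1 := P12.finrank_submodule
  have hP13r : finrank F ↥P13.submodule = 1 := P13.finrank_submodule
  have hP23r : finrank F ↥P23.submodule = 1 := P23.finrank_submodule
  have hM1M2 : M1.submodule ≠ M2.submodule :=
    fun h => hM (Projectivization.submodule_injective h)
  have hP12Sg3 : ¬ P12.submodule ≤ Sg3 := by
    intro h
    exact hP12m (by rw [hm, ← hπ12]; exact le_inf hP12 h)
  have hP13Sg2 : ¬ P13.submodule ≤ Sg2 := by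
    intro h
    exact hP13m (by rw [hm]; exact le_inf (le_inf (hP13.trans hπ13Sg1) h) (hP13.trans hπ13Sg3))
  have hP23Sg1 : ¬ P23.submodule ≤ Sg1 := by
    intro h
    exact hP23m (by rw [hm]; exact le_inf (le_inf h (hP23.trans hπ23Sg2)) (hP23.trans hπ23Sg3))
  -- the lines ℓ12, ℓ22
  have hP12ℓ12 : P12.submodule ≤ ℓ12 := by rw [hℓ12]; exact le_sup_left
  have hP12ℓ22 : P12.submodule ≤ ℓ22 := by rw [hℓ22]; exact le_sup_left
  have hP12P13 : P12.submodule ⊓ P13.submodule = ⊥ :=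
    pt_inf_bot hP12r (fun h => hP12Sg3 (h.trans (hP13.trans hπ13Sg3)))
  have hP12P23 : P12.submodule ⊓ P23.submodule = ⊥ :=
    pt_inf_bot hP12r (fun h => hP12Sg3 (h.trans (hP23.trans hπ23Sg3)))
  have hℓ12r : finrank F ↥ℓ12 = 2 := by
    rw [hℓ12, rk_sup_disj hP12P13, hP12r, hP13r]
  have hℓ22r : finrank F ↥ℓ22 = 2 := by
    rw [hℓ22, rk_sup_disj hP12P23, hP12r, hP23r]
  have hℓ12Sg1 : ℓ12 ≤ Sg1 := by
    rw [hℓ12]; exact sup_le (hP12.trans hπ12Sg1) (hP13.trans hπ13Sg1)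
  have hℓ22Sg2 : ℓ22 ≤ Sg2 := by
    rw [hℓ22]; exact sup_le (hP12.trans hπ12Sg2) (hP23.trans hπ23Sg2)
  have hℓ12nSg2 : ¬ ℓ12 ≤ Sg2 := by
    intro h
    exact hP13Sg2 ((by rw [hℓ12]; exact le_sup_right : P13.submodule ≤ ℓ12).trans h)
  have hℓ22nSg1 : ¬ ℓ22 ≤ Sg1 := by
    intro h
    exact hP23Sg1 ((by rw [hℓ22]; exact le_sup_right : P23.submodule ≤ ℓ22).trans h)
  have hℓ12Sg2 : ℓ12 ⊓ Sg2 = P12.submodule :=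
    line_pt hℓ12r hℓ12nSg2 hP12r hP12ℓ12 (hP12.trans hπ12Sg2)
  have hℓ22Sg1 : ℓ22 ⊓ Sg1 = P12.submodule :=
    line_pt hℓ22r hℓ22nSg1 hP12r hP12ℓ22 (hP12.trans hπ12Sg1)
  have hℓ12π12 : ℓ12 ⊓ π12 = P12.submodule :=
    line_pt hℓ12r (fun h => hℓ12nSg2 (h.trans hπ12Sg2)) hP12r hP12ℓ12 hP12
  have hℓ22π12 : ℓ22 ⊓ π12 = P12.submodule :=
    line_pt hℓ22r (fun h => hℓ22nSg1 (h.trans hπ12Sg1)) hP12r hP12ℓ22 hP12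
  -- the lines ℓ11, ℓ21
  have hℓ11nSg2 : ¬ ℓ11 ≤ Sg2 := fun h => hℓ11a (by rw [hπ12]; exact le_inf hℓ11Sg h)
  have hℓ11nSg3 : ¬ ℓ11 ≤ Sg3 := fun h => hℓ11b (by rw [hπ13]; exact le_inf hℓ11Sg h)
  have hℓ21nSg1 : ¬ ℓ21 ≤ Sg1 := fun h => hℓ21a (by rw [hπ12]; exact le_inf h hℓ21Sg)
  have hℓ21nSg3 : ¬ ℓ21 ≤ Sg3 := fun h => hℓ21b (by rw [hπ23]; exact le_inf hℓ21Sg h)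
  have hℓ11Sg2 : ℓ11 ⊓ Sg2 = M1.submodule :=
    line_pt hℓ11dim hℓ11nSg2 hM1r hℓ11M (hM1.trans hmSg2)
  have hℓ11Sg3 : ℓ11 ⊓ Sg3 = M1.submodule :=
    line_pt hℓ11dim hℓ11nSg3 hM1r hℓ11M (hM1.trans hmSg3)
  have hℓ11π12 : ℓ11 ⊓ π12 = M1.submodule :=
    line_pt hℓ11dim hℓ11a hM1r hℓ11M (hM1.trans hmπ12)
  have hℓ21Sg1 : ℓ21 ⊓ Sg1 = M2.submodule :=
    line_pt hℓ21dim hℓ21nSg1 hM2r hℓ21M (hM2.trans hmSg1)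
  have hℓ21Sg3 : ℓ21 ⊓ Sg3 = M2.submodule :=
    line_pt hℓ21dim hℓ21nSg3 hM2r hℓ21M (hM2.trans hmSg3)
  have hℓ21π12 : ℓ21 ⊓ π12 = M2.submodule :=
    line_pt hℓ21dim hℓ21a hM2r hℓ21M (hM2.trans hmπ12)
  -- the skew pairs span the solids
  have hsup1 : ℓ11 ⊔ ℓ12 = Sg1 := by
    apply eq_of_le_rk (sup_le hℓ11Sg hℓ12Sg1)
    rw [hSg1, rk_sup_disj hℓ11skew, hℓ11dim, hℓ12r]
  have hsup2 : ℓ21 ⊔ ℓ22 = Sg2 := by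
    apply eq_of_le_rk (sup_le hℓ21Sg hℓ22Sg2)
    rw [hSg2, rk_sup_disj hℓ21skew, hℓ21dim, hℓ22r]
  -- m = M1 ⊔ M2, π12 = m ⊔ P12
  have hM1M2inf : M1.submodule ⊓ M2.submodule = ⊥ :=
    inf_pt_bot hM1r hM2r inf_le_right hM1M2
  have hMm : M1.submodule ⊔ M2.submodule = m := by
    apply eq_of_le_rk (sup_le hM1 hM2)
    rw [hmdim, rk_sup_disj hM1M2inf, hM1r, hM2r]
  have hM1P12 : M1.submodule ≠ P12.submodule := by
    intro h
    exact hP12m (h ▸ hM1)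
  have hM2P12 : M2.submodule ≠ P12.submodule := by
    intro h
    exact hP12m (h ▸ hM2)
  have ht1r : finrank F ↥(M1.submodule ⊔ P12.submodule) = 2 := by
    rw [rk_sup_disj (inf_pt_bot hM1r hP12r inf_le_right hM1P12), hM1r, hP12r]
  have ht2r : finrank F ↥(M2.submodule ⊔ P12.submodule) = 2 := by
    rw [rk_sup_disj (inf_pt_bot hM2r hP12r inf_le_right hM2P12), hM2r, hP12r]
  have ht1π : M1.submodule ⊔ P12.submodule ≤ π12 := sup_le (hM1.trans hmπ12) hP12
  have ht2π : M2.submodule ⊔ P12.submodule ≤ π12 := sup_le (hM2.trans hmπ12) hP12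
  have hmP12π : m ⊔ P12.submodule = π12 := by
    apply eq_of_le_rk (sup_le hmπ12 hP12)
    have hd : m ⊓ P12.submodule = ⊥ := by
      rw [inf_comm]; exact pt_inf_bot hP12r hP12m
    rw [hπ12dim, rk_sup_disj hd, hmdim, hP12r]
  have hM1ne : M1.submodule ≠ ⊥ := ne_bot_of_rk (by rw [hM1r])
  have hM2ne : M2.submodule ≠ ⊥ := ne_bot_of_rk (by rw [hM2r])
  have hP12ne : P12.submodule ≠ ⊥ := ne_bot_of_rk (by rw [hP12r])
  constructor
  · -- PART 1 : classification
    intro α hα3 h11 h12 h21 h22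
    by_cases hα1 : α ≤ Sg1
    · -- α ⊆ Σ₁ : cases (1) and (3)
      have hM2α : M2.submodule ≤ α := by
        have h1 : α ⊓ ℓ21 ≤ M2.submodule := by
          rw [← hℓ21Sg1]; exact le_inf inf_le_right (inf_le_left.trans hα1)
        exact (pt_eq hM2r h1 h21).symm.le.trans inf_le_left
      have hP12α : P12.submodule ≤ α := by
        have h1 : α ⊓ ℓ22 ≤ P12.submodule := by
          rw [← hℓ22Sg1]; exact le_inf inf_le_right (inf_le_left.trans hα1)
        exact (pt_eq hP12r h1 h22).symm.le.trans inf_le_left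
      by_cases hmα : m ≤ α
      · right; right; left
        have h1 : π12 ≤ α := by rw [← hmP12π]; exact sup_le hmα hP12α
        exact (eq_of_le_rk h1 (by rw [hα3, hπ12dim])).symm
      · left
        have hle13 : α ⊓ Sg3 ≤ π13 := by
          rw [hπ13]; exact le_inf (inf_le_left.trans hα1) inf_le_right
        have hge : 2 ≤ finrank F ↥(α ⊓ Sg3) := by
          have := hIL α Sg3; omega
        have hne3 : ¬ α ≤ Sg3 := fun h => hP12Sg3 (hP12α.trans h)
        have hle2 : finrank F ↥(α ⊓ Sg3) ≤ 2 := by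
          by_contra hc
          push_neg at hc
          exact hne3 (le_of_inf_rk (by omega))
        refine ⟨hle13, le_antisymm hle2 hge, le_inf hM2α (hM2.trans hmSg3), ?_⟩
        intro h
        exact hmα (h ▸ (inf_le_left : α ⊓ Sg3 ≤ α))
    · by_cases hα2 : α ≤ Sg2
      · -- α ⊆ Σ₂ : cases (2) and (3)
        have hM1α : M1.submodule ≤ α := by
          have h1 : α ⊓ ℓ11 ≤ M1.submodule := by
            rw [← hℓ11Sg2]; exact le_inf inf_le_right (inf_le_left.trans hα2)
          exact (pt_eq hM1r h1 h11).symm.le.trans inf_le_left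
        have hP12α : P12.submodule ≤ α := by
          have h1 : α ⊓ ℓ12 ≤ P12.submodule := by
            rw [← hℓ12Sg2]; exact le_inf inf_le_right (inf_le_left.trans hα2)
          exact (pt_eq hP12r h1 h12).symm.le.trans inf_le_left
        by_cases hmα : m ≤ α
        · right; right; left
          have h1 : π12 ≤ α := by rw [← hmP12π]; exact sup_le hmα hP12α
          exact (eq_of_le_rk h1 (by rw [hα3, hπ12dim])).symm
        · right; left
          have hle23 : α ⊓ Sg3 ≤ π23 := by
            rw [hπ23]; exact le_inf (inf_le_left.trans hα2) inf_le_right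
          have hge : 2 ≤ finrank F ↥(α ⊓ Sg3) := by
            have := hIL α Sg3; omega
          have hne3 : ¬ α ≤ Sg3 := fun h => hP12Sg3 (hP12α.trans h)
          have hle2 : finrank F ↥(α ⊓ Sg3) ≤ 2 := by
            by_contra hc
            push_neg at hc
            exact hne3 (le_of_inf_rk (by omega))
          refine ⟨hle23, le_antisymm hle2 hge, le_inf hM1α (hM1.trans hmSg3), ?_⟩
          intro h
          exact hmα (h ▸ (inf_le_left : α ⊓ Sg3 ≤ α))
      · -- α in neither solid : case (4)
        right; right; right
        have ha1r : finrank F ↥(α ⊓ Sg1) = 2 := by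
          have hge : 2 ≤ finrank F ↥(α ⊓ Sg1) := by have := hIL α Sg1; omega
          have hle : finrank F ↥(α ⊓ Sg1) ≤ 2 := by
            by_contra hc
            push_neg at hc
            exact hα1 (le_of_inf_rk (by omega))
          omega
        have ha2r : finrank F ↥(α ⊓ Sg2) = 2 := by
          have hge : 2 ≤ finrank F ↥(α ⊓ Sg2) := by have := hIL α Sg2; omega
          have hle : finrank F ↥(α ⊓ Sg2) ≤ 2 := by
            by_contra hc
            push_neg at hc
            exact hα2 (le_of_inf_rk (by omega))
          omega
        -- the trace α ⊓ Sg1 is not contained in π12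
        have hC : ¬ α ⊓ Sg1 ≤ π12 := by
          intro hc
          have ha12 : α ⊓ Sg1 ≤ α ⊓ Sg2 := le_inf inf_le_left (hc.trans hπ12Sg2)
          have hM1a : M1.submodule ≤ α ⊓ Sg1 := by
            have h1 : α ⊓ ℓ11 ≤ M1.submodule := by
              rw [← hℓ11π12]
              exact le_inf inf_le_right ((le_inf inf_le_left
                (inf_le_right.trans hℓ11Sg)).trans hc)
            exact (pt_eq hM1r h1 h11).symm.le.trans
              (le_inf inf_le_left (inf_le_right.trans hℓ11Sg))
          have hP12a : P12.submodule ≤ α ⊓ Sg1 := by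
            have h1 : α ⊓ ℓ12 ≤ P12.submodule := by
              rw [← hℓ12π12]
              exact le_inf inf_le_right ((le_inf inf_le_left
                (inf_le_right.trans hℓ12Sg1)).trans hc)
            exact (pt_eq hP12r h1 h12).symm.le.trans
              (le_inf inf_le_left (inf_le_right.trans hℓ12Sg1))
          have ha21 : α ⊓ Sg2 ≤ α ⊓ Sg1 := by
            have := eq_of_le_rk ha12 (by omega)
            exact this.symm.le
          have hM2a : M2.submodule ≤ α ⊓ Sg1 := by
            have h1 : α ⊓ ℓ21 ≤ M2.submodule := by
              rw [← hℓ21π12]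
              refine le_inf inf_le_right ?_
              exact ((le_inf inf_le_left (inf_le_right.trans hℓ21Sg)).trans ha21).trans hc
            exact (pt_eq hM2r h1 h21).symm.le.trans
              (((le_inf inf_le_left (inf_le_right.trans hℓ21Sg)).trans ha21))
          have hππ : π12 ≤ α ⊓ Sg1 := by
            rw [← hmP12π, ← hMm]
            exact sup_le (sup_le hM1a hM2a) hP12a
          have := rk_mono hππ
          rw [hπ12dim, ha1r] at this
          omega
        have hαπ : α ⊓ π12 = (α ⊓ Sg1) ⊓ (α ⊓ Sg2) := by
          rw [hπ12]; exact inf_inf_distrib_left α Sg1 Sg2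
        have hA1r : finrank F ↥(α ⊓ π12) = 1 := by
          have hge : 1 ≤ finrank F ↥(α ⊓ π12) := by
            have := hIL α π12; omega
          have hle : finrank F ↥(α ⊓ π12) ≤ 1 := by
            by_contra hcc
            push_neg at hcc
            rw [hαπ] at hcc
            have h2 : (α ⊓ Sg1) ⊓ (α ⊓ Sg2) = α ⊓ Sg1 :=
              eq_of_le_rk (inf_le_left : (α ⊓ Sg1) ⊓ (α ⊓ Sg2) ≤ α ⊓ Sg1) (by omega)
            have h3 : α ⊓ Sg1 ≤ α ⊓ Sg2 := h2 ▸ inf_le_right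
            exact hC (by rw [hπ12]; exact le_inf inf_le_right (h3.trans inf_le_right))
          omega
        refine ⟨hA1r, ?_, ?_⟩
        · -- α ⊓ π12 avoids ⟨M1,P12⟩ ∖ {M1, P12}
          intro hAt1
          by_contra hcon
          push_neg at hcon
          obtain ⟨hn1, hn2⟩ := hcon
          have hAl11 : (α ⊓ π12) ⊓ ℓ11 = ⊥ := by
            refine inf_pt_bot hA1r hM1r ?_ hn1
            rw [← hℓ11π12]
            exact le_inf inf_le_right (inf_le_left.trans inf_le_right)
          have hAl12 : (α ⊓ π12) ⊓ ℓ12 = ⊥ := by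
            refine inf_pt_bot hA1r hP12r ?_ hn2
            rw [← hℓ12π12]
            exact le_inf inf_le_right (inf_le_left.trans inf_le_right)
          obtain ⟨hc2, hAc, hcl1, hcl2, huniq⟩ :=
            transversal hSg1 hℓ11dim hℓ12r hsup1 hA1r (inf_le_right.trans hπ12Sg1) hAl11 hAl12
          have ha1c : α ⊓ Sg1 = (α ⊓ π12 ⊔ ℓ11) ⊓ (α ⊓ π12 ⊔ ℓ12) := by
            refine huniq (α ⊓ Sg1) ha1r
              (le_inf inf_le_left (inf_le_right.trans hπ12Sg1)) ?_ ?_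
            · exact ne_bot_mono (le_inf (le_inf inf_le_left
                (inf_le_right.trans hℓ11Sg)) inf_le_right) h11
            · exact ne_bot_mono (le_inf (le_inf inf_le_left
                (inf_le_right.trans hℓ12Sg1)) inf_le_right) h12
          have ht1c : M1.submodule ⊔ P12.submodule
              = (α ⊓ π12 ⊔ ℓ11) ⊓ (α ⊓ π12 ⊔ ℓ12) := by
            refine huniq _ ht1r hAt1 ?_ ?_
            · exact ne_bot_mono (le_inf le_sup_left hℓ11M) hM1ne
            · exact ne_bot_mono (le_inf le_sup_right hP12ℓ12) hP12ne
          exact hC ((ha1c.trans ht1c.symm).le.trans ht1π)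
        · -- α ⊓ π12 avoids ⟨M2,P12⟩ ∖ {M2, P12}
          intro hAt2
          by_contra hcon
          push_neg at hcon
          obtain ⟨hn1, hn2⟩ := hcon
          have hC2 : ¬ α ⊓ Sg2 ≤ π12 := by
            intro hc
            have h3 : α ⊓ Sg2 ≤ α ⊓ Sg1 := le_inf inf_le_left (hc.trans hπ12Sg1)
            have := eq_of_le_rk h3 (by omega)
            exact hC (by rw [← this]; exact hc)
          have hAl21 : (α ⊓ π12) ⊓ ℓ21 = ⊥ := by
            refine inf_pt_bot hA1r hM2r ?_ hn1
            rw [← hℓ21π12]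
            exact le_inf inf_le_right (inf_le_left.trans inf_le_right)
          have hAl22 : (α ⊓ π12) ⊓ ℓ22 = ⊥ := by
            refine inf_pt_bot hA1r hP12r ?_ hn2
            rw [← hℓ22π12]
            exact le_inf inf_le_right (inf_le_left.trans inf_le_right)
          obtain ⟨hc2, hAc, hcl1, hcl2, huniq⟩ :=
            transversal hSg2 hℓ21dim hℓ22r hsup2 hA1r (inf_le_right.trans hπ12Sg2) hAl21 hAl22
          have ha2c : α ⊓ Sg2 = (α ⊓ π12 ⊔ ℓ21) ⊓ (α ⊓ π12 ⊔ ℓ22) := by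
            refine huniq (α ⊓ Sg2) ha2r
              (le_inf inf_le_left (inf_le_right.trans hπ12Sg2)) ?_ ?_
            · exact ne_bot_mono (le_inf (le_inf inf_le_left
                (inf_le_right.trans hℓ21Sg)) inf_le_right) h21
            · exact ne_bot_mono (le_inf (le_inf inf_le_left
                (inf_le_right.trans hℓ22Sg2)) inf_le_right) h22
          have ht2c : M2.submodule ⊔ P12.submodule
              = (α ⊓ π12 ⊔ ℓ21) ⊓ (α ⊓ π12 ⊔ ℓ22) := by
            refine huniq _ ht2r hAt2 ?_ ?_
            · exact ne_bot_mono (le_inf le_sup_left hℓ21M) hM2ne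
            · exact ne_bot_mono (le_inf le_sup_right hP12ℓ22) hP12ne
          exact hC2 ((ha2c.trans ht2c.symm).le.trans ht2π)
  · -- PART 2 : existence and uniqueness
    intro A hAπ hAt1 hAt2
    have hAr : finrank F ↥A.submodule = 1 := A.finrank_submodule
    have hAM1 : A.submodule ≠ M1.submodule := fun h => hAt1 (h.le.trans le_sup_left)
    have hAM2 : A.submodule ≠ M2.submodule := fun h => hAt2 (h.le.trans le_sup_left)
    have hAP12 : A.submodule ≠ P12.submodule := fun h => hAt1 (h.le.trans le_sup_right)
    have hA11 : A.submodule ⊓ ℓ11 = ⊥ := by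
      refine inf_pt_bot hAr hM1r ?_ hAM1
      rw [← hℓ11π12]
      exact le_inf inf_le_right (inf_le_left.trans hAπ)
    have hA12 : A.submodule ⊓ ℓ12 = ⊥ := by
      refine inf_pt_bot hAr hP12r ?_ hAP12
      rw [← hℓ12π12]
      exact le_inf inf_le_right (inf_le_left.trans hAπ)
    have hA21 : A.submodule ⊓ ℓ21 = ⊥ := by
      refine inf_pt_bot hAr hM2r ?_ hAM2
      rw [← hℓ21π12]
      exact le_inf inf_le_right (inf_le_left.trans hAπ)
    have hA22 : A.submodule ⊓ ℓ22 = ⊥ := by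
      refine inf_pt_bot hAr hP12r ?_ hAP12
      rw [← hℓ22π12]
      exact le_inf inf_le_right (inf_le_left.trans hAπ)
    obtain ⟨hc1r, hAc1, hc1l1, hc1l2, huniq1⟩ :=
      transversal hSg1 hℓ11dim hℓ12r hsup1 hAr (hAπ.trans hπ12Sg1) hA11 hA12
    obtain ⟨hc2r, hAc2, hc2l1, hc2l2, huniq2⟩ :=
      transversal hSg2 hℓ21dim hℓ22r hsup2 hAr (hAπ.trans hπ12Sg2) hA21 hA22
    set a1 : Submodule F (Fin 5 → F) := (A.submodule ⊔ ℓ11) ⊓ (A.submodule ⊔ ℓ12) with ha1def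
    set a2 : Submodule F (Fin 5 → F) := (A.submodule ⊔ ℓ21) ⊓ (A.submodule ⊔ ℓ22) with ha2def
    have ha1Sg : a1 ≤ Sg1 := inf_le_left.trans (sup_le (hAπ.trans hπ12Sg1) hℓ11Sg)
    have ha2Sg : a2 ≤ Sg2 := inf_le_left.trans (sup_le (hAπ.trans hπ12Sg2) hℓ21Sg)
    have ha1π : a1 ⊓ π12 = A.submodule := by
      have hnle : ¬ a1 ≤ π12 := by
        intro hle
        have hM1a : M1.submodule ≤ a1 := by
          have h1 : a1 ⊓ ℓ11 ≤ M1.submodule := by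
            rw [← hℓ11π12]; exact le_inf inf_le_right (inf_le_left.trans hle)
          exact (pt_eq hM1r h1 hc1l1).symm.le.trans inf_le_left
        have hP12a : P12.submodule ≤ a1 := by
          have h1 : a1 ⊓ ℓ12 ≤ P12.submodule := by
            rw [← hℓ12π12]; exact le_inf inf_le_right (inf_le_left.trans hle)
          exact (pt_eq hP12r h1 hc1l2).symm.le.trans inf_le_left
        have heq : M1.submodule ⊔ P12.submodule = a1 :=
          eq_of_le_rk (sup_le hM1a hP12a) (by omega)
        exact hAt1 (hAc1.trans heq.symm.le)
      exact line_pt hc1r hnle hAr hAc1 hAπ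
    have ha2π : a2 ⊓ π12 = A.submodule := by
      have hnle : ¬ a2 ≤ π12 := by
        intro hle
        have hM2a : M2.submodule ≤ a2 := by
          have h1 : a2 ⊓ ℓ21 ≤ M2.submodule := by
            rw [← hℓ21π12]; exact le_inf inf_le_right (inf_le_left.trans hle)
          exact (pt_eq hM2r h1 hc2l1).symm.le.trans inf_le_left
        have hP12a : P12.submodule ≤ a2 := by
          have h1 : a2 ⊓ ℓ22 ≤ P12.submodule := by
            rw [← hℓ22π12]; exact le_inf inf_le_right (inf_le_left.trans hle)
          exact (pt_eq hP12r h1 hc2l2).symm.le.trans inf_le_left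
        have heq : M2.submodule ⊔ P12.submodule = a2 :=
          eq_of_le_rk (sup_le hM2a hP12a) (by omega)
        exact hAt2 (hAc2.trans heq.symm.le)
      exact line_pt hc2r hnle hAr hAc2 hAπ
    have ha12 : a1 ⊓ a2 = A.submodule := by
      apply le_antisymm
      · have h1 : a1 ⊓ a2 ≤ π12 := by
          rw [hπ12]
          exact le_inf (inf_le_left.trans ha1Sg) (inf_le_right.trans ha2Sg)
        rw [← ha1π]
        exact le_inf inf_le_left h1
      · exact le_inf hAc1 hAc2
    have hαr : finrank F ↥(a1 ⊔ a2) = 3 := by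
      have h1 := rk_sup_inf a1 a2
      rw [ha12, hAr, hc1r, hc2r] at h1
      omega
    have hnle1 : ¬ a1 ⊔ a2 ≤ Sg1 := by
      intro h
      have h1 : a2 ≤ π12 := by
        rw [hπ12]; exact le_inf (le_sup_right.trans h) ha2Sg
      have h2 : a2 ⊓ π12 = a2 := inf_eq_left.mpr h1
      rw [h2] at ha2π
      rw [ha2π, hAr] at hc2r
      exact absurd hc2r (by norm_num)
    have hαSg1 : (a1 ⊔ a2) ⊓ Sg1 = a1 := by
      have hle2 : finrank F ↥((a1 ⊔ a2) ⊓ Sg1) ≤ 2 := by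
        by_contra hc
        push_neg at hc
        exact hnle1 (le_of_inf_rk (by omega))
      exact (eq_of_le_rk (le_inf le_sup_left ha1Sg) (by omega)).symm
    have hαπeq : (a1 ⊔ a2) ⊓ π12 = A.submodule := by
      apply le_antisymm
      · rw [← ha1π]
        exact le_inf ((le_inf inf_le_left (inf_le_right.trans hπ12Sg1)).trans hαSg1.le)
          inf_le_right
      · exact le_inf (hAc1.trans le_sup_left) hAπ
    refine ⟨a1 ⊔ a2, ⟨hαr, ?_, ?_, ?_, ?_, hαπeq⟩, ?_⟩
    · exact ne_bot_mono (inf_le_inf_right ℓ11 (le_sup_left : a1 ≤ a1 ⊔ a2)) hc1l1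
    · exact ne_bot_mono (inf_le_inf_right ℓ12 (le_sup_left : a1 ≤ a1 ⊔ a2)) hc1l2
    · exact ne_bot_mono (inf_le_inf_right ℓ21 (le_sup_right : a2 ≤ a1 ⊔ a2)) hc2l1
    · exact ne_bot_mono (inf_le_inf_right ℓ22 (le_sup_right : a2 ≤ a1 ⊔ a2)) hc2l2
    · -- uniqueness
      rintro α' ⟨hα'3, h11', h12', h21', h22', hπ'⟩
      have hnle1' : ¬ α' ≤ Sg1 := by
        intro h
        have h1 : 2 ≤ finrank F ↥(α' ⊓ Sg2) := by
          have := hIL α' Sg2; omega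
        have h2 : α' ⊓ Sg2 ≤ A.submodule := by
          rw [← hπ']
          exact le_inf inf_le_left
            (by rw [hπ12]; exact le_inf (inf_le_left.trans h) inf_le_right)
        have := rk_mono h2
        rw [hAr] at this
        omega
      have hnle2' : ¬ α' ≤ Sg2 := by
        intro h
        have h1 : 2 ≤ finrank F ↥(α' ⊓ Sg1) := by
          have := hIL α' Sg1; omega
        have h2 : α' ⊓ Sg1 ≤ A.submodule := by
          rw [← hπ']
          exact le_inf inf_le_left
            (by rw [hπ12]; exact le_inf inf_le_right (inf_le_left.trans h))
        have := rk_mono h2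
        rw [hAr] at this
        omega
      have hb1r : finrank F ↥(α' ⊓ Sg1) = 2 := by
        have hge : 2 ≤ finrank F ↥(α' ⊓ Sg1) := by have := hIL α' Sg1; omega
        have hle : finrank F ↥(α' ⊓ Sg1) ≤ 2 := by
          by_contra hc
          push_neg at hc
          exact hnle1' (le_of_inf_rk (by omega))
        omega
      have hb2r : finrank F ↥(α' ⊓ Sg2) = 2 := by
        have hge : 2 ≤ finrank F ↥(α' ⊓ Sg2) := by have := hIL α' Sg2; omega
        have hle : finrank F ↥(α' ⊓ Sg2) ≤ 2 := by
          by_contra hc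
          push_neg at hc
          exact hnle2' (le_of_inf_rk (by omega))
        omega
      have hb1 : α' ⊓ Sg1 = a1 := by
        refine huniq1 (α' ⊓ Sg1) hb1r ?_ ?_ ?_
        · exact hπ' ▸ (le_inf inf_le_left (inf_le_right.trans hπ12Sg1) :
            α' ⊓ π12 ≤ α' ⊓ Sg1)
        · exact ne_bot_mono (le_inf (le_inf inf_le_left
            (inf_le_right.trans hℓ11Sg)) inf_le_right) h11'
        · exact ne_bot_mono (le_inf (le_inf inf_le_left
            (inf_le_right.trans hℓ12Sg1)) inf_le_right) h12'
      have hb2 : α' ⊓ Sg2 = a2 := by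
        refine huniq2 (α' ⊓ Sg2) hb2r ?_ ?_ ?_
        · exact hπ' ▸ (le_inf inf_le_left (inf_le_right.trans hπ12Sg2) :
            α' ⊓ π12 ≤ α' ⊓ Sg2)
        · exact ne_bot_mono (le_inf (le_inf inf_le_left
            (inf_le_right.trans hℓ21Sg)) inf_le_right) h21'
        · exact ne_bot_mono (le_inf (le_inf inf_le_left
            (inf_le_right.trans hℓ22Sg2)) inf_le_right) h22'
      have hsuple : a1 ⊔ a2 ≤ α' := sup_le (hb1 ▸ inf_le_left) (hb2 ▸ inf_le_left)
      exact (eq_of_le_rk hsuple (by omega)).symm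
end

section
/- Let m(5,q) denote the minimum length of a minimal linear code of dimension 5 over F_q. If there exists a higgledy-piggledy set of six lines in PG(4,q), two of which intersect, then m(5,q) ≤ 6q+5. -/
open Module

open HP

/-- A linear code (subspace of `F^n`) is minimal if the support of any nonzero codeword
contains the support of another codeword only when the latter is a scalar multiple. -/
def IsMinimalCode {F : Type*} [Field F] {n : ℕ} (C : Submodule F (Fin n → F)) : Prop :=
  ∀ c ∈ C, c ≠ 0 → ∀ c' ∈ C, c' ≠ 0 →
    {i | c' i ≠ 0} ⊆ {i | c i ≠ 0} → ∃ a : F, c' = a • c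

/- ------------------ auxiliary material ------------------- -/

section Aux

variable {F : Type*} [Field F]

/-- A projectivization of a finite module is finite. -/
lemma projFinite (V : Type*) [AddCommGroup V] [Module F V] [Finite V] :
    Finite (Projectivization F V) := by
  have hs : Function.Surjective
      (fun v : {v : V // v ≠ 0} => Projectivization.mk F v.1 v.2) := by
    intro P
    exact ⟨⟨P.rep, P.rep_nonzero⟩, P.mk_rep⟩
  exact Finite.of_surjective _ hs

lemma rep_mem_submodule {V : Type*} [AddCommGroup V] [Module F V]
    (P : Projectivization F V) : P.rep ∈ P.submodule := by
  rw [Projectivization.submodule_eq]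
  exact Submodule.mem_span_singleton_self _

/-- A projective line over `F` has at most `|F| + 1` points. -/
lemma ncard_ptsIn_le [Fintype F] {V : Type*} [AddCommGroup V] [Module F V]
    [FiniteDimensional F V] (ℓ : Submodule F V) (h2 : finrank F ℓ = 2) :
    (ptsIn F V ℓ).ncard ≤ Fintype.card F + 1 := by
  classical
  let b : Basis (Fin 2) F ℓ := Module.finBasisOfFinrankEq F ℓ h2
  have hmem : ∀ P : ptsIn F V ℓ, (P.1.rep : V) ∈ ℓ := fun P => P.2 (rep_mem_submodule P.1)
  let vec : ptsIn F V ℓ → ℓ := fun P => ⟨P.1.rep, hmem P⟩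
  have hvec_ne : ∀ P, vec P ≠ 0 := by
    intro P h
    exact P.1.rep_nonzero (by simpa [vec, Subtype.ext_iff] using h)
  let f : ptsIn F V ℓ → Option F := fun P =>
    if b.repr (vec P) 0 = 0 then none else some (b.repr (vec P) 1 / b.repr (vec P) 0)
  have hnz : ∀ P : ptsIn F V ℓ, b.repr (vec P) 0 = 0 → b.repr (vec P) 1 ≠ 0 := by
    intro P h0 h1
    apply hvec_ne P
    apply b.repr.injective
    ext i
    fin_cases i <;> simp [h0, h1]
  have hinj : Function.Injective f := by
    intro P Q hPQ
    have key : ∃ a : F, a ≠ 0 ∧ b.repr (vec Q) = a • b.repr (vec P) := by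
      by_cases h0 : b.repr (vec P) 0 = 0
      · have hQ0 : b.repr (vec Q) 0 = 0 := by
          by_contra hQ0
          simp [f, h0, hQ0] at hPQ
        have hP1 := hnz P h0
        have hQ1 := hnz Q hQ0
        refine ⟨b.repr (vec Q) 1 / b.repr (vec P) 1, div_ne_zero hQ1 hP1, ?_⟩
        ext i
        fin_cases i <;> simp [h0, hQ0, div_mul_cancel₀, hP1]
      · have hQ0 : b.repr (vec Q) 0 ≠ 0 := by
          intro hQ0
          simp [f, h0, hQ0] at hPQ
        have hr : b.repr (vec P) 1 / b.repr (vec P) 0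
            = b.repr (vec Q) 1 / b.repr (vec Q) 0 := by
          simpa [f, h0, hQ0] using hPQ
        refine ⟨b.repr (vec Q) 0 / b.repr (vec P) 0, div_ne_zero hQ0 h0, ?_⟩
        ext i
        fin_cases i
        · simp [div_mul_cancel₀, h0]
        · simp only [Finsupp.smul_apply, smul_eq_mul]
          rw [div_eq_div_iff h0 hQ0] at hr
          rw [div_mul_eq_mul_div, eq_div_iff h0]
          simp only [Fin.mk_one]
          linear_combination -hr
    obtain ⟨a, ha, hrepr⟩ := key
    have hveq : (vec Q : ℓ) = a • vec P := by
      apply b.repr.injective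
      rw [map_smul, hrepr]
    have hreps : Q.1.rep = a • P.1.rep := by
      have := congrArg (Subtype.val : ℓ → V) hveq
      simpa [vec] using this
    have : Q.1 = P.1 := by
      conv_lhs => rw [← Q.1.mk_rep]
      conv_rhs => rw [← P.1.mk_rep]
      rw [Projectivization.mk_eq_mk_iff']
      exact ⟨a, hreps.symm⟩
    exact (Subtype.ext this).symm
  calc (ptsIn F V ℓ).ncard = Nat.card (ptsIn F V ℓ) := (Nat.card_coe_set_eq _).symm
    _ ≤ Nat.card (Option F) := Nat.card_le_card_of_injective f hinj
    _ = Fintype.card F + 1 := by simp [Nat.card_eq_fintype_card]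

/-- Upper bound for the cardinality of a finite union of uniformly bounded sets. -/
lemma ncard_biUnion_le' {α β : Type*} {T : Set α} (hT : T.Finite) (f : α → Set β) (m : ℕ)
    (h : ∀ a ∈ T, (f a).ncard ≤ m) : (⋃ a ∈ T, f a).ncard ≤ T.ncard * m := by
  classical
  induction T, hT using Set.Finite.induction_on with
  | empty => simp
  | insert ha hTf ih =>
    rename_i x T'
    rw [Set.biUnion_insert]
    calc (f x ∪ ⋃ a ∈ T', f a).ncard ≤ (f x).ncard + (⋃ a ∈ T', f a).ncard :=
          Set.ncard_union_le _ _
      _ ≤ m + T'.ncard * m := by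
          gcongr
          · exact h x (Set.mem_insert _ _)
          · exact ih fun a haT => h a (Set.mem_insert_of_mem _ haT)
      _ = (insert x T').ncard * m := by
          rw [Set.ncard_insert_of_notMem ha hTf]; ring

/-- The "dot product" linear functional. -/
noncomputable def dp (x : Fin 5 → F) : (Fin 5 → F) →ₗ[F] F :=
  ∑ j, x j • LinearMap.proj j

lemma dp_apply (x v : Fin 5 → F) : dp x v = ∑ j, x j * v j := by
  simp [dp]

lemma dp_comm (x v : Fin 5 → F) : dp x v = dp v x := by
  simp [dp_apply, mul_comm]

lemma dp_single (x : Fin 5 → F) (j : Fin 5) : dp x (Pi.single j 1) = x j := by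
  rw [dp_apply]
  rw [Finset.sum_eq_single j]
  · simp
  · intro k _ hk
    simp [Pi.single_apply, hk]
  · simp

lemma dp_surjective {x : Fin 5 → F} (hx : x ≠ 0) : Function.Surjective (dp x) := by
  obtain ⟨j, hj⟩ := Function.ne_iff.1 hx
  have hj' : x j ≠ 0 := by simpa using hj
  intro c
  refine ⟨(c / x j) • (Pi.single j 1 : Fin 5 → F), ?_⟩
  rw [map_smul, dp_single, smul_eq_mul]
  field_simp

lemma finrank_ker_dp {x : Fin 5 → F} (hx : x ≠ 0) :
    finrank F (LinearMap.ker (dp x)) = 4 := by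
  have h := LinearMap.finrank_range_add_finrank_ker (dp x)
  rw [LinearMap.range_eq_top.2 (dp_surjective hx), finrank_top, finrank_self,
    Module.finrank_fin_fun] at h
  omega

end Aux

/-- if there exists a higgledy-piggledy set of six lines of `PG(4,q)`,
two of which intersect, then there is a minimal linear code of dimension `5` over `F_q`
of length at most `6q+5`; i.e. `m(5,q) ≤ 6q+5`. -/
theorem stmt_19 (F : Type*) [Field F] [Fintype F]
    (hex : ∃ L : Set (Submodule F (Fin 5 → F)),
      (∀ ℓ ∈ L, finrank F ℓ = 2) ∧ L.ncard = 6 ∧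
      StrongBlock F (Fin 5 → F) 4 1 (⋃ ℓ ∈ L, ptsIn F (Fin 5 → F) ℓ) ∧
      ∃ ℓ₁ ∈ L, ∃ ℓ₂ ∈ L, ℓ₁ ≠ ℓ₂ ∧ ℓ₁ ⊓ ℓ₂ ≠ ⊥) :
    ∃ n : ℕ, n ≤ 6 * Fintype.card F + 5 ∧
      ∃ C : Submodule F (Fin n → F), finrank F C = 5 ∧ IsMinimalCode C := by
  classical
  obtain ⟨L, hdim, hL6, hSB, ℓ₁, hℓ₁, ℓ₂, hℓ₂, hneq, hint⟩ := hex
  haveI : Finite (Projectivization F (Fin 5 → F)) := projFinite _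
  set q := Fintype.card F with hq
  set S : Set (Projectivization F (Fin 5 → F)) := ⋃ ℓ ∈ L, ptsIn F (Fin 5 → F) ℓ with hSdef
  have hSfin : S.Finite := Set.toFinite S
  have hLfin : L.Finite := Set.finite_of_ncard_ne_zero (by rw [hL6]; norm_num)
  -- the intersection point of the two lines
  obtain ⟨v₀, hv₀mem, hv₀⟩ := Submodule.exists_mem_ne_zero_of_ne_bot hint
  set P₀ := Projectivization.mk F v₀ hv₀ with hP₀def
  have hP₀₁ : P₀ ∈ ptsIn F (Fin 5 → F) ℓ₁ := by
    show P₀.submodule ≤ ℓ₁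
    rw [hP₀def, Projectivization.submodule_mk, Submodule.span_singleton_le_iff_mem]
    exact hv₀mem.1
  have hP₀₂ : P₀ ∈ ptsIn F (Fin 5 → F) ℓ₂ := by
    show P₀.submodule ≤ ℓ₂
    rw [hP₀def, Projectivization.submodule_mk, Submodule.span_singleton_le_iff_mem]
    exact hv₀mem.2
  -- cardinality bound for S
  have hScard : S.ncard ≤ 6 * q + 5 := by
    have hsub : S ⊆ (⋃ ℓ ∈ L \ {ℓ₂}, ptsIn F (Fin 5 → F) ℓ)
        ∪ (ptsIn F (Fin 5 → F) ℓ₂ \ {P₀}) := by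
      intro P hP
      rw [hSdef, Set.mem_iUnion₂] at hP
      obtain ⟨ℓ, hℓ, hPℓ⟩ := hP
      by_cases hℓeq : ℓ = ℓ₂
      · subst hℓeq
        by_cases hPP : P = P₀
        · left
          exact Set.mem_biUnion ⟨hℓ₁, by simpa using hneq⟩ (hPP ▸ hP₀₁)
        · right
          exact ⟨hPℓ, by simpa using hPP⟩
      · left
        exact Set.mem_biUnion ⟨hℓ, by simpa using hℓeq⟩ hPℓ
    have h1 : (⋃ ℓ ∈ L \ {ℓ₂}, ptsIn F (Fin 5 → F) ℓ).ncard ≤ 5 * (q + 1) := by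
      have hc : (L \ {ℓ₂}).ncard = 5 := by
        rw [Set.ncard_diff_singleton_of_mem hℓ₂, hL6]
      calc (⋃ ℓ ∈ L \ {ℓ₂}, ptsIn F (Fin 5 → F) ℓ).ncard
          ≤ (L \ {ℓ₂}).ncard * (q + 1) :=
            ncard_biUnion_le' hLfin.diff _ _
              (fun ℓ hℓ => ncard_ptsIn_le ℓ (hdim ℓ hℓ.1))
        _ = 5 * (q + 1) := by rw [hc]
    have h2 : (ptsIn F (Fin 5 → F) ℓ₂ \ {P₀}).ncard ≤ q := by
      have hlt : (ptsIn F (Fin 5 → F) ℓ₂ \ {P₀}).ncard < (ptsIn F (Fin 5 → F) ℓ₂).ncard :=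
        Set.ncard_diff_singleton_lt_of_mem hP₀₂ (Set.toFinite _)
      have := ncard_ptsIn_le ℓ₂ (hdim ℓ₂ hℓ₂)
      omega
    calc S.ncard ≤ ((⋃ ℓ ∈ L \ {ℓ₂}, ptsIn F (Fin 5 → F) ℓ)
          ∪ (ptsIn F (Fin 5 → F) ℓ₂ \ {P₀})).ncard :=
          Set.ncard_le_ncard hsub (Set.toFinite _)
      _ ≤ (⋃ ℓ ∈ L \ {ℓ₂}, ptsIn F (Fin 5 → F) ℓ).ncard
          + (ptsIn F (Fin 5 → F) ℓ₂ \ {P₀}).ncard := Set.ncard_union_le _ _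
      _ ≤ 5 * (q + 1) + q := by omega
      _ = 6 * q + 5 := by ring
  -- the generator matrix
  set n := hSfin.toFinset.card with hndef
  have hn : n = S.ncard := (Set.ncard_eq_toFinset_card S hSfin).symm
  set e : hSfin.toFinset ≃ Fin n := hSfin.toFinset.equivFin with hedef
  set g : Fin n → (Fin 5 → F) := fun i => ((e.symm i : hSfin.toFinset) : Projectivization F (Fin 5 → F)).rep with hgdef
  have hgS : ∀ P ∈ S, ∃ i, g i = P.rep := by
    intro P hP
    have hP' : P ∈ hSfin.toFinset := hSfin.mem_toFinset.2 hP
    exact ⟨e ⟨P, hP'⟩, by simp [hgdef]⟩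
  set φ : (Fin 5 → F) →ₗ[F] (Fin n → F) := LinearMap.pi (fun i => dp (g i)) with hφdef
  have hφ_apply : ∀ x i, φ x i = dp x (g i) := by
    intro x i
    rw [hφdef, LinearMap.pi_apply, dp_comm]
  -- the span of the columns is everything
  have hspan : Submodule.span F (Set.range g) = ⊤ := by
    set W : Fin 5 → Submodule F (Fin 5 → F) :=
      fun j => LinearMap.ker (dp (Pi.single j (1 : F))) with hWdef
    have hsingle_ne : ∀ j : Fin 5, (Pi.single j (1 : F) : Fin 5 → F) ≠ 0 := by
      intro j h
      have := congrFun h j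
      simp at this
    have hW4 : ∀ j, finrank F (W j) = 4 := fun j => finrank_ker_dp (hsingle_ne j)
    have hWle : ∀ j, W j ≤ Submodule.span F (Set.range g) := by
      intro j
      rw [← hSB (W j) (by rw [hW4 j])]
      refine iSup₂_le fun P hP => ?_
      rw [Projectivization.submodule_eq, Submodule.span_singleton_le_iff_mem]
      obtain ⟨i, hi⟩ := hgS P hP.1
      exact hi ▸ Submodule.subset_span ⟨i, rfl⟩
    have hWne : W 0 ≠ W 1 := by
      intro h
      have h1 : (Pi.single (1 : Fin 5) (1 : F) : Fin 5 → F) ∈ W 0 := by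
        rw [hWdef, LinearMap.mem_ker, dp_comm, dp_single]
        simp
      rw [h] at h1
      rw [hWdef, LinearMap.mem_ker, dp_comm, dp_single] at h1
      simp at h1
    have hlt : W 0 < W 0 ⊔ W 1 := by
      refine lt_of_le_of_ne le_sup_left fun h => ?_
      have h1 : W 1 ≤ W 0 := by rw [h]; exact le_sup_right
      exact hWne (Submodule.eq_of_le_of_finrank_le h1 (by rw [hW4, hW4])).symm
    have hfr : finrank F (W 0 ⊔ W 1 : Submodule F (Fin 5 → F)) = 5 := by
      have hgt := Submodule.finrank_lt_finrank_of_lt hlt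
      have hle5 : finrank F (W 0 ⊔ W 1 : Submodule F (Fin 5 → F)) ≤ 5 := by
        have := Submodule.finrank_le (W 0 ⊔ W 1)
        rwa [Module.finrank_fin_fun] at this
      rw [hW4] at hgt
      omega
    have htop : W 0 ⊔ W 1 = ⊤ :=
      Submodule.eq_top_of_finrank_eq (by rw [hfr, Module.finrank_fin_fun])
    rw [← top_le_iff, ← htop]
    exact sup_le (hWle 0) (hWle 1)
  -- injectivity
  have hφinj : Function.Injective φ := by
    rw [← LinearMap.ker_eq_bot]
    rw [Submodule.eq_bot_iff]
    intro x hx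
    have hgker : ∀ i, dp x (g i) = 0 := by
      intro i
      have := congrFun (LinearMap.mem_ker.1 hx) i
      rwa [hφ_apply] at this
    have hker : Submodule.span F (Set.range g) ≤ LinearMap.ker (dp x) := by
      rw [Submodule.span_le]
      rintro v ⟨i, rfl⟩
      exact hgker i
    rw [hspan, top_le_iff] at hker
    funext j
    have : dp x (Pi.single j 1) = 0 := by
      have : (Pi.single j (1:F)) ∈ LinearMap.ker (dp x) := by rw [hker]; trivial
      exact this
    rwa [dp_single] at this
  refine ⟨n, by omega, LinearMap.range φ, ?_, ?_⟩
  · rw [LinearMap.finrank_range_of_inj hφinj, Module.finrank_fin_fun]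
  · -- minimality
    rintro c ⟨x, rfl⟩ hc0 c' ⟨x', rfl⟩ hc'0 hsupp
    have hx : x ≠ 0 := fun h => hc0 (by rw [h, map_zero])
    have hx' : x' ≠ 0 := fun h => hc'0 (by rw [h, map_zero])
    have hWx : finrank F (LinearMap.ker (dp x)) = 4 := finrank_ker_dp hx
    have hle : LinearMap.ker (dp x) ≤ LinearMap.ker (dp x') := by
      rw [← hSB (LinearMap.ker (dp x)) (by rw [hWx])]
      refine iSup₂_le fun P hP => ?_
      rw [Projectivization.submodule_eq, Submodule.span_singleton_le_iff_mem]
      obtain ⟨i, hi⟩ := hgS P hP.1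
      have hrepW : P.rep ∈ LinearMap.ker (dp x) := hP.2 (rep_mem_submodule P)
      have hci : φ x i = 0 := by
        rw [hφ_apply, hi]
        exact hrepW
      have hci' : φ x' i = 0 := by
        by_contra h
        exact (fun h2 => h2 hci) (hsupp h)
      rw [LinearMap.mem_ker, ← hi, ← hφ_apply]
      exact hci'
    -- two functionals with nested kernels are proportional
    obtain ⟨j, hj0⟩ := Function.ne_iff.1 hx
    have hj : x j ≠ 0 := by simpa using hj0
    set v : Fin 5 → F := (x j)⁻¹ • (Pi.single j 1 : Fin 5 → F) with hvdef
    have hv1 : dp x v = 1 := by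
      rw [hvdef, map_smul, dp_single, smul_eq_mul]
      field_simp
    refine ⟨dp x' v, ?_⟩
    funext i
    have hmemker : g i - (dp x (g i)) • v ∈ LinearMap.ker (dp x) := by
      rw [LinearMap.mem_ker, map_sub, map_smul, hv1, smul_eq_mul, mul_one, sub_self]
    have := hle hmemker
    rw [LinearMap.mem_ker, map_sub, map_smul, smul_eq_mul, sub_eq_zero] at this
    rw [hφ_apply, Pi.smul_apply, hφ_apply, smul_eq_mul, this]
    ring
end
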